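/- Let σ : ℝ → [0,1] be Lipschitz continuous with Lipschitz constant C_Lip ≥ 1, let K ∈ ℕ (the number of hidden neurons), and let w, w̄ ∈ ℝ^{1+K(d+2)} be two weight vectors defining shallow networks f_{net,w}(x) = w₁,₀^{(1)} + Σ_{j=1}^{K} w₁,ⱼ^{(1)}·σ(Σ_{k=1}^d w_{j,k}^{(0)}·x^{(k)} + w_{j,0}^{(0)}) and f_{net,w̄} analogously. Then for any x ∈ ℝ^d, |f_{net,w}(x) − f_{net,w̄}(x)| ≤ C_Lip · max{‖x‖_∞, 1} · max_{k=1,…,K} max{|w̄₁,ₖ^{(1)}|, 1} · (Σ_{j=0}^{K} |w₁,ⱼ^{(1)} − w̄₁,ⱼ^{(1)}| + Σ_{j=1}^{K} (|w_{j,0}^{(0)} − w̄_{j,0}^{(0)}| + Σ_{k=1}^d |w_{j,k}^{(0)} − w̄_{j,k}^{(0)}|)). -/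
import Mathlib


noncomputable section

abbrev Evec (d : ℕ) := EuclideanSpace ℝ (Fin d)

/-- Index type of the weights of a shallow network with `K` neurons in dimension `d`:
outer weights `w₁,₀^{(1)},…,w₁,K^{(1)}`, inner weights `w_{j,k}^{(0)}` and inner biases
`w_{j,0}^{(0)}`. -/
abbrev WIdx (d K : ℕ) := Fin (K + 1) ⊕ (Fin K × Fin d) ⊕ Fin K

/-- The weight space `ℝ^{1+K(d+2)}` with Euclidean norm. -/
abbrev WVec (d K : ℕ) := EuclideanSpace ℝ (WIdx d K)

/-- Outer weight `w₁,ₖ^{(1)}` (with `k = 0` the constant term). -/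
def outw {d K : ℕ} (w : WVec d K) (k : Fin (K + 1)) : ℝ := w (Sum.inl k)

/-- Inner weight `w_{j,i}^{(0)}`. -/
def inw {d K : ℕ} (w : WVec d K) (j : Fin K) (i : Fin d) : ℝ := w (Sum.inr (Sum.inl (j, i)))

/-- Inner bias `w_{j,0}^{(0)}`. -/
def inb {d K : ℕ} (w : WVec d K) (j : Fin K) : ℝ := w (Sum.inr (Sum.inr j))

/-- The shallow neural network with activation `σ` and weight vector `w`. -/
def fnet {d K : ℕ} (σ : ℝ → ℝ) (w : WVec d K) (x : Evec d) : ℝ :=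
  outw w 0 + ∑ j : Fin K, outw w j.succ * σ (∑ i : Fin d, inw w j i * x i + inb w j)

/-- Supremum norm `‖x‖_∞` on `ℝ^d`. -/
def supNorm {d : ℕ} (x : Evec d) : ℝ := ‖(WithLp.equiv 2 (Fin d → ℝ) x : Fin d → ℝ)‖

/-- Lemma 6: Lipschitz dependence of a shallow network on its weights. -/
theorem statement9 (d K : ℕ) (hK : 0 < K) (σ : ℝ → ℝ) (CLip : ℝ) (hCLip : 1 ≤ CLip)
    (hσrange : ∀ x, σ x ∈ Set.Icc (0 : ℝ) 1)
    (hσlip : ∀ x y, |σ x - σ y| ≤ CLip * |x - y|)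
    (w wb : WVec d K) (x : Evec d) :
    |fnet σ w x - fnet σ wb x| ≤
      CLip * max (supNorm x) 1 * (⨆ k : Fin K, max |outw wb k.succ| 1) *
        ((∑ j : Fin (K + 1), |outw w j - outw wb j|) +
          ∑ j : Fin K, (|inb w j - inb wb j| + ∑ k : Fin d, |inw w j k - inw wb j k|)) := by
  have hne : Nonempty (Fin K) := ⟨⟨0, hK⟩⟩
  set M := ⨆ k : Fin K, max |outw wb k.succ| 1 with hMdef
  have hbdd : BddAbove (Set.range fun k : Fin K => max |outw wb k.succ| 1) :=
    Set.Finite.bddAbove (Set.finite_range _)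
  have hM1 : (1:ℝ) ≤ M :=
    le_trans (le_max_right _ _) (le_ciSup hbdd (Classical.arbitrary _))
  have hMj : ∀ j : Fin K, |outw wb j.succ| ≤ M := fun j =>
    le_trans (le_max_left _ _) (le_ciSup hbdd j)
  set X := max (supNorm x) 1 with hXdef
  have hX1 : (1:ℝ) ≤ X := le_max_right _ _
  have hXi : ∀ i : Fin d, |x i| ≤ X := by
    intro i
    refine le_trans ?_ (le_max_left _ _)
    have := norm_le_pi_norm (WithLp.equiv 2 (Fin d → ℝ) x) i
    simpa [supNorm, Real.norm_eq_abs] using this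
  have hC0 : (0:ℝ) ≤ CLip := le_trans zero_le_one hCLip
  have hX0 : (0:ℝ) ≤ X := le_trans zero_le_one hX1
  have hM0 : (0:ℝ) ≤ M := le_trans zero_le_one hM1
  have hCXM1 : (1:ℝ) ≤ CLip * X * M := by
    have h1 : (1:ℝ) * 1 ≤ CLip * X := mul_le_mul hCLip hX1 zero_le_one hC0
    calc (1:ℝ) = 1 * 1 * 1 := by ring
      _ ≤ CLip * X * M :=
        mul_le_mul h1 hM1 zero_le_one (le_trans zero_le_one (by simpa using h1))
  have hCXM0 : (0:ℝ) ≤ CLip * X * M := le_trans zero_le_one hCXM1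
  have hσabs : ∀ t, |σ t| ≤ 1 := by
    intro t; rcases hσrange t with ⟨h0, h1⟩
    rw [abs_of_nonneg h0]; exact h1
  have key : ∀ j : Fin K,
      |outw w j.succ * σ (∑ i : Fin d, inw w j i * x i + inb w j)
        - outw wb j.succ * σ (∑ i : Fin d, inw wb j i * x i + inb wb j)|
      ≤ |outw w j.succ - outw wb j.succ|
        + CLip * X * M * (|inb w j - inb wb j| + ∑ i : Fin d, |inw w j i - inw wb j i|) := by
    intro j
    set a := outw w j.succ with ha
    set b := outw wb j.succ with hb
    set u := ∑ i : Fin d, inw w j i * x i + inb w j with hu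
    set v := ∑ i : Fin d, inw wb j i * x i + inb wb j with hv
    set S := |inb w j - inb wb j| + ∑ i : Fin d, |inw w j i - inw wb j i| with hS
    have huv : |u - v| ≤ X * S := by
      have heq : u - v = (∑ i : Fin d, (inw w j i - inw wb j i) * x i)
          + (inb w j - inb wb j) := by
        rw [hu, hv]
        have h3 : ∑ i : Fin d, (inw w j i - inw wb j i) * x i
            = (∑ i : Fin d, inw w j i * x i) - ∑ i : Fin d, inw wb j i * x i := by
          rw [← Finset.sum_sub_distrib]
          exact Finset.sum_congr rfl fun i _ => by ring
        rw [h3]; ring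
      rw [heq]
      have h2 : |∑ i : Fin d, (inw w j i - inw wb j i) * x i|
          ≤ ∑ i : Fin d, |inw w j i - inw wb j i| * X := by
        refine le_trans (Finset.abs_sum_le_sum_abs _ _) (Finset.sum_le_sum ?_)
        intro i _
        rw [abs_mul]
        exact mul_le_mul_of_nonneg_left (hXi i) (abs_nonneg _)
      calc |(∑ i : Fin d, (inw w j i - inw wb j i) * x i) + (inb w j - inb wb j)|
          ≤ |∑ i : Fin d, (inw w j i - inw wb j i) * x i| + |inb w j - inb wb j| :=
            abs_add_le _ _
        _ ≤ (∑ i : Fin d, |inw w j i - inw wb j i| * X) + X * |inb w j - inb wb j| := by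
            gcongr
            exact le_mul_of_one_le_left (abs_nonneg _) hX1
        _ = X * S := by rw [hS, ← Finset.sum_mul]; ring
    have hS0 : (0:ℝ) ≤ S := by
      rw [hS]
      have : (0:ℝ) ≤ ∑ i : Fin d, |inw w j i - inw wb j i| :=
        Finset.sum_nonneg fun i _ => abs_nonneg _
      positivity
    have h1 : |a * σ u - b * σ v| ≤ |a - b| * |σ u| + |b| * |σ u - σ v| := by
      have he : a * σ u - b * σ v = (a - b) * σ u + b * (σ u - σ v) := by ring
      rw [he]
      exact le_trans (abs_add_le _ _) (by rw [abs_mul, abs_mul])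
    calc |a * σ u - b * σ v| ≤ |a - b| * |σ u| + |b| * |σ u - σ v| := h1
      _ ≤ |a - b| * 1 + M * (CLip * (X * S)) := by
          refine add_le_add (mul_le_mul_of_nonneg_left (hσabs u) (abs_nonneg _)) ?_
          refine mul_le_mul (hMj j) ?_ (abs_nonneg _) hM0
          exact le_trans (hσlip u v) (mul_le_mul_of_nonneg_left huv hC0)
      _ = |a - b| + CLip * X * M * S := by ring
  have hsplit : fnet σ w x - fnet σ wb x = (outw w 0 - outw wb 0)
      + ∑ j : Fin K, (outw w j.succ * σ (∑ i : Fin d, inw w j i * x i + inb w j)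
          - outw wb j.succ * σ (∑ i : Fin d, inw wb j i * x i + inb wb j)) := by
    rw [fnet, fnet, Finset.sum_sub_distrib]; ring
  set A := ∑ j : Fin (K + 1), |outw w j - outw wb j| with hAdef
  set T := ∑ j : Fin K, (|inb w j - inb wb j| + ∑ k : Fin d, |inw w j k - inw wb j k|)
    with hTdef
  have hA0 : (0:ℝ) ≤ A := Finset.sum_nonneg fun j _ => abs_nonneg _
  have hT0 : (0:ℝ) ≤ T := by
    refine Finset.sum_nonneg fun j _ => ?_
    have : (0:ℝ) ≤ ∑ k : Fin d, |inw w j k - inw wb j k| :=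
      Finset.sum_nonneg fun i _ => abs_nonneg _
    positivity
  have hAsucc : A = |outw w 0 - outw wb 0|
      + ∑ j : Fin K, |outw w j.succ - outw wb j.succ| := by
    rw [hAdef, Fin.sum_univ_succ]
  calc |fnet σ w x - fnet σ wb x|
      ≤ |outw w 0 - outw wb 0|
        + ∑ j : Fin K, |outw w j.succ * σ (∑ i : Fin d, inw w j i * x i + inb w j)
            - outw wb j.succ * σ (∑ i : Fin d, inw wb j i * x i + inb wb j)| := by
        rw [hsplit]
        exact le_trans (abs_add_le _ _) (by gcongr; exact Finset.abs_sum_le_sum_abs _ _)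
    _ ≤ |outw w 0 - outw wb 0| + ∑ j : Fin K, (|outw w j.succ - outw wb j.succ|
          + CLip * X * M * (|inb w j - inb wb j| + ∑ i : Fin d, |inw w j i - inw wb j i|)) := by
        gcongr with j hj
        exact key j
    _ = A + CLip * X * M * T := by
        rw [hAsucc, Finset.sum_add_distrib, ← Finset.mul_sum, ← hTdef]; ring
    _ ≤ CLip * X * M * A + CLip * X * M * T := by
        gcongr
        exact le_mul_of_one_le_left hA0 hCXM1
    _ = CLip * X * M * (A + T) := by ring

end
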